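/- For any weighted Kendall distance d_φ with nonnegative weight function φ on adjacent transpositions, and for all π, σ ∈ S_n: (1/2)·D_φ(π,σ) ≤ d_φ(π,σ) ≤ D_φ(π,σ), where D_φ(π,σ) = Σ_{i=1}^{n} w(π⁻¹(i) : σ⁻¹(i)) and w(k:l) is the sum of weights φ((h, h+1)) for h ranging over the positions between min(k,l) and max(k,l)-1 (and 0 if k = l). -/

import Mathlib

open Equiv Finset

/-- The adjacent transposition swapping positions `i` and `i+1` (0-indexed);
identity if out of range. -/
def adjSwap (n i : ℕ) : Equiv.Perm (Fin n) :=
  if h : i + 1 < n then Equiv.swap ⟨i, Nat.lt_of_succ_lt h⟩ ⟨i + 1, h⟩ else 1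

/-- `ω` is between `π` and `σ`: on every pair `{a,b}`, `ω` agrees with `π` or with `σ`. -/
def Between {n : ℕ} (π ω σ : Equiv.Perm (Fin n)) : Prop :=
  ∀ a b : Fin n, (π⁻¹ a < π⁻¹ b ↔ ω⁻¹ a < ω⁻¹ b) ∨ (σ⁻¹ a < σ⁻¹ b ↔ ω⁻¹ a < ω⁻¹ b)

/-- Kendall tau distance: minimum number of adjacent transpositions transforming `π` into `σ`. -/
noncomputable def kendall {n : ℕ} (π σ : Equiv.Perm (Fin n)) : ℕ :=
  sInf {s | ∃ l : List ℕ, (∀ i ∈ l, i + 1 < n) ∧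
    σ = π * (l.map (adjSwap n)).prod ∧ l.length = s}

/-- The set of inversions between `π` and `σ` (each unordered pair `{i,j}` of disagreement
is recorded as the ordered pair `(i,j)` with `i` ranked before `j` by `π`). -/
def invSet {n : ℕ} (π σ : Equiv.Perm (Fin n)) : Finset (Fin n × Fin n) :=
  Finset.univ.filter fun p => π⁻¹ p.1 < π⁻¹ p.2 ∧ σ⁻¹ p.2 < σ⁻¹ p.1

/-- Elements `j` on whose relative order with `i` the permutations `π` and `σ` disagree. -/
def invWith {n : ℕ} (π σ : Equiv.Perm (Fin n)) (i : Fin n) : Finset (Fin n) :=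
  Finset.univ.filter fun j => ¬(π⁻¹ i < π⁻¹ j ↔ σ⁻¹ i < σ⁻¹ j)

/-- Weighted Kendall distance for weight function `φ` on adjacent transpositions
(`φ h` is the weight of swapping positions `h, h+1`, 0-indexed). -/
noncomputable def wKendall {n : ℕ} (φ : ℕ → ℝ) (π σ : Equiv.Perm (Fin n)) : ℝ :=
  sInf {w | ∃ l : List ℕ, (∀ i ∈ l, i + 1 < n) ∧
    σ = π * (l.map (adjSwap n)).prod ∧ (l.map φ).sum = w}

/-- `w(k:l)`: sum of adjacent-transposition weights between positions `min k l` and `max k l - 1`. -/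
def wsum (φ : ℕ → ℝ) (k l : ℕ) : ℝ := ∑ h ∈ Finset.Ico (min k l) (max k l), φ h

/-- The generalized (weighted) Spearman footrule `D_φ`. -/
noncomputable def DKendall {n : ℕ} (φ : ℕ → ℝ) (π σ : Equiv.Perm (Fin n)) : ℝ :=
  ∑ i : Fin n, wsum φ ((π⁻¹ i : Fin n) : ℕ) ((σ⁻¹ i : Fin n) : ℕ)

/-- Weighted transposition distance with weight function `φ` on transpositions. -/
noncomputable def wTrans {n : ℕ} (φ : Fin n → Fin n → ℝ) (π σ : Equiv.Perm (Fin n)) : ℝ :=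
  sInf {w | ∃ l : List (Fin n × Fin n), (∀ p ∈ l, p.1 ≠ p.2) ∧
    σ = π * (l.map fun p => Equiv.swap p.1 p.2).prod ∧
    (l.map fun p => φ p.1 p.2).sum = w}

/-- Weight of a path (as a list of vertices) in the complete graph `K_φ`. -/
def pathWt {n : ℕ} (φ : Fin n → Fin n → ℝ) (p : List (Fin n)) : ℝ :=
  ((p.zip p.tail).map fun q => φ q.1 q.2).sum

/-- `p` is a path from `a` to `b` (consecutive vertices distinct). -/
def IsPath {n : ℕ} (p : List (Fin n)) (a b : Fin n) : Prop :=
  p.head? = some a ∧ p.getLast? = some b ∧ p.Chain' (· ≠ ·)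

/-- Minimum weight of a path from `a` to `b` in `K_φ`. -/
noncomputable def minPathWt {n : ℕ} (φ : Fin n → Fin n → ℝ) (a b : Fin n) : ℝ :=
  sInf {w | ∃ p : List (Fin n), IsPath p a b ∧ pathWt φ p = w}

/-- The footrule-type lower/upper bounding function `D_φ` for transposition weights. -/
noncomputable def DTrans {n : ℕ} (φ : Fin n → Fin n → ℝ) (π σ : Equiv.Perm (Fin n)) : ℝ :=
  ∑ i : Fin n, minPathWt φ (π⁻¹ i) (σ⁻¹ i)

-- auxiliary development, to be inserted before stmt7
section Aux

variable {n : ℕ}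

private def Fsum (φ : ℕ → ℝ) (k : ℕ) : ℝ := ∑ h ∈ Finset.range k, φ h

private lemma Fsum_mono (φ : ℕ → ℝ) (hφ : ∀ i, 0 ≤ φ i) {k l : ℕ} (h : k ≤ l) :
    Fsum φ k ≤ Fsum φ l := by
  unfold Fsum
  exact Finset.sum_le_sum_of_subset_of_nonneg (Finset.range_subset_range.2 h)
    (fun i _ _ => hφ i)

private lemma wsum_of_le (φ : ℕ → ℝ) {k l : ℕ} (h : k ≤ l) :
    wsum φ k l = ∑ h ∈ Finset.Ico k l, φ h := by
  rw [wsum, min_eq_left h, max_eq_right h]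

private lemma wsum_eq_abs (φ : ℕ → ℝ) (hφ : ∀ i, 0 ≤ φ i) (k l : ℕ) :
    wsum φ k l = |Fsum φ k - Fsum φ l| := by
  rcases le_total k l with h | h
  · rw [wsum_of_le φ h, abs_sub_comm, abs_of_nonneg (by linarith [Fsum_mono φ hφ h])]
    rw [Fsum, Fsum, ← Finset.sum_Ico_eq_sub _ h]
  · rw [wsum, min_eq_right h, max_eq_left h,
      abs_of_nonneg (by linarith [Fsum_mono φ hφ h])]
    rw [Fsum, Fsum, ← Finset.sum_Ico_eq_sub _ h]

private lemma wsum_self (φ : ℕ → ℝ) (k : ℕ) : wsum φ k k = 0 := by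
  simp [wsum]

private lemma wsum_comm (φ : ℕ → ℝ) (k l : ℕ) : wsum φ k l = wsum φ l k := by
  rw [wsum, wsum, min_comm, max_comm]

private lemma wsum_nonneg (φ : ℕ → ℝ) (hφ : ∀ i, 0 ≤ φ i) (k l : ℕ) :
    0 ≤ wsum φ k l :=
  Finset.sum_nonneg fun i _ => hφ i

private lemma wsum_triangle (φ : ℕ → ℝ) (hφ : ∀ i, 0 ≤ φ i) (a b c : ℕ) :
    wsum φ a c ≤ wsum φ a b + wsum φ b c := by
  rw [wsum_eq_abs φ hφ, wsum_eq_abs φ hφ, wsum_eq_abs φ hφ]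
  exact abs_sub_le _ _ _

private lemma wsum_add (φ : ℕ → ℝ) {a b c : ℕ} (hab : a ≤ b) (hbc : b ≤ c) :
    wsum φ a c = wsum φ a b + wsum φ b c := by
  rw [wsum_of_le φ (hab.trans hbc), wsum_of_le φ hab, wsum_of_le φ hbc]
  exact (Finset.sum_Ico_consecutive _ hab hbc).symm

private lemma wsum_adj (φ : ℕ → ℝ) (b : ℕ) : wsum φ b (b + 1) = φ b := by
  rw [wsum_of_le φ (Nat.le_succ b), Nat.Ico_succ_singleton, Finset.sum_singleton]

private lemma adjSwap_eq {i : ℕ} (h : i + 1 < n) :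
    adjSwap n i = Equiv.swap ⟨i, Nat.lt_of_succ_lt h⟩ ⟨i + 1, h⟩ :=
  dif_pos h

private lemma adjSwap_inv (i : ℕ) : (adjSwap n i)⁻¹ = adjSwap n i := by
  unfold adjSwap
  split
  · exact Equiv.swap_inv _ _
  · rfl

/-- realize a swap of positions `a < b` by adjacent transpositions of cost `≤ 2 w(a:b)`. -/
private lemma swap_list (φ : ℕ → ℝ) (hφ : ∀ i, 0 ≤ φ i) :
    ∀ {a b : ℕ} (hab : a < b) (hb : b < n),
    ∃ l : List ℕ, (∀ i ∈ l, i + 1 < n) ∧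
      (l.map (adjSwap n)).prod = Equiv.swap ⟨a, lt_trans hab hb⟩ ⟨b, hb⟩ ∧
      (l.map φ).sum ≤ 2 * wsum φ a b := by
  intro a b hab hb
  induction b, hab using Nat.le_induction with
  | base =>
    refine ⟨[a], by simpa using hb, ?_, ?_⟩
    · simp [adjSwap_eq hb]
    · simp only [List.map_cons, List.map_nil, List.sum_cons, List.sum_nil, add_zero,
        wsum_adj]
      linarith [hφ a]
  | succ b hab ih =>
    have hbn : b < n := Nat.lt_of_succ_lt hb
    obtain ⟨l, hl1, hl2, hl3⟩ := ih hbn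
    refine ⟨b :: (l ++ [b]), ?_, ?_, ?_⟩
    · intro i hi
      simp only [List.mem_cons, List.mem_append, List.mem_singleton] at hi
      rcases hi with rfl | hi | rfl | hfalse
      · exact hb
      · exact hl1 i hi
      · exact hb
      · exact absurd hfalse List.not_mem_nil
    · have hs : adjSwap n b = Equiv.swap ⟨b, hbn⟩ ⟨b + 1, hb⟩ := adjSwap_eq hb
      simp only [List.map_cons, List.map_append, List.map_nil, List.prod_cons,
        List.prod_append, List.prod_nil, mul_one, hl2, hs]
      have key := Equiv.swap_apply_apply (Equiv.swap (⟨b, hbn⟩ : Fin n) ⟨b + 1, hb⟩)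
        (⟨a, lt_trans (Nat.lt_succ_of_lt hab) hb⟩ : Fin n) (⟨b, hbn⟩ : Fin n)
      have ha1 : Equiv.swap (⟨b, hbn⟩ : Fin n) ⟨b + 1, hb⟩ ⟨a, lt_trans (Nat.lt_succ_of_lt hab) hb⟩
          = ⟨a, lt_trans (Nat.lt_succ_of_lt hab) hb⟩ := by
        apply Equiv.swap_apply_of_ne_of_ne <;>
          · intro hcon
            have := congrArg Fin.val hcon
            simp at this
            omega
      have ha2 : Equiv.swap (⟨b, hbn⟩ : Fin n) ⟨b + 1, hb⟩ ⟨b, hbn⟩ = ⟨b + 1, hb⟩ :=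
        Equiv.swap_apply_left _ _
      rw [ha1, ha2] at key
      rw [← mul_assoc, key]
      congr 1
    · simp only [List.map_cons, List.map_append, List.map_nil, List.sum_cons,
        List.sum_append, List.sum_nil, add_zero]
      have : wsum φ a (b + 1) = wsum φ a b + φ b := by
        rw [wsum_add φ (le_of_lt hab) (Nat.le_succ b), wsum_adj]
      rw [this]
      linarith

end Aux

section Aux2

variable {n : ℕ}

private lemma sum_two_diff (f g : Fin n → ℝ) (c m : Fin n) (hcm : c ≠ m)
    (hoff : ∀ j, j ≠ c → j ≠ m → f j = g j) :
    ∑ j, f j = (∑ j, g j) + ((f c - g c) + (f m - g m)) := by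
  have key : ∀ j : Fin n, f j = g j +
      ((if j = c then f c - g c else 0) + (if j = m then f m - g m else 0)) := by
    intro j
    by_cases h1 : j = c
    · subst h1; simp [hcm]
    · by_cases h2 : j = m
      · subst h2; simp [h1]
      · simp [h1, h2, hoff j h1 h2]
  rw [Finset.sum_congr rfl (fun j _ => key j)]
  rw [Finset.sum_add_distrib, Finset.sum_add_distrib, Finset.sum_ite_eq', Finset.sum_ite_eq']
  simp

private lemma exists_sort (φ : ℕ → ℝ) (hφ : ∀ i, 0 ≤ φ i) :
    ∀ τ : Equiv.Perm (Fin n), ∃ l : List ℕ, (∀ i ∈ l, i + 1 < n) ∧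
      (l.map (adjSwap n)).prod = τ ∧
      (l.map φ).sum ≤ ∑ j : Fin n, wsum φ (j : ℕ) ((τ⁻¹ j : Fin n) : ℕ) := by
  suffices H : ∀ k (τ : Equiv.Perm (Fin n)), τ.support.card ≤ k →
      ∃ l : List ℕ, (∀ i ∈ l, i + 1 < n) ∧
      (l.map (adjSwap n)).prod = τ ∧
      (l.map φ).sum ≤ ∑ j : Fin n, wsum φ (j : ℕ) ((τ⁻¹ j : Fin n) : ℕ) by
    exact fun τ => H τ.support.card τ le_rfl
  intro k
  induction k with
  | zero =>
    intro τ hτ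
    have h1 : τ = 1 := by
      rw [← Equiv.Perm.support_eq_empty_iff]
      exact Finset.card_eq_zero.1 (Nat.le_zero.1 hτ)
    subst h1
    exact ⟨[], by simp, by simp, by simp [wsum_self]⟩
  | succ k ih =>
    intro τ hτ
    by_cases h1 : τ = 1
    · subst h1
      exact ⟨[], by simp, by simp, by simp [wsum_self]⟩
    have hne : τ.support.Nonempty := by
      rw [Finset.nonempty_iff_ne_empty]
      intro h
      exact h1 (Equiv.Perm.support_eq_empty_iff.1 h)
    set m := τ.support.max' hne with hm_def
    have hm : m ∈ τ.support := τ.support.max'_mem hne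
    have hmne : τ m ≠ m := Equiv.Perm.mem_support.1 hm
    set b := τ⁻¹ m with hb_def
    set c := τ m with hc_def
    have hτb : τ b = m := τ.apply_symm_apply m
    have hbm : b ≠ m := by
      intro h
      rw [h] at hτb
      exact hmne hτb
    have hcm : c ≠ m := hmne
    have hbmem : b ∈ τ.support := by
      rw [Equiv.Perm.mem_support, hτb]
      exact fun h => hbm h.symm
    have hcmem : c ∈ τ.support := Equiv.Perm.apply_mem_support.2 hm
    have hblt : (b : ℕ) < (m : ℕ) :=
      lt_of_le_of_ne (Finset.le_max' _ b hbmem) (fun h => hbm (Fin.ext h))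
    have hclt : (c : ℕ) < (m : ℕ) :=
      lt_of_le_of_ne (Finset.le_max' _ c hcmem) (fun h => hcm (Fin.ext h))
    have hcard1 : 1 ≤ τ.support.card := Finset.card_pos.2 ⟨m, hm⟩
    have hτicm : τ⁻¹ c = m := τ.symm_apply_apply m
    rcases le_total (c : ℕ) (b : ℕ) with hcb | hbc
    · -- move m down to b's place: τ = τ' * swap b m
      obtain ⟨l₀, hl₀1, hl₀2, hl₀3⟩ := swap_list φ hφ hblt m.isLt
      have hl₀2' : (l₀.map (adjSwap n)).prod = Equiv.swap b m := by
        rw [hl₀2]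
      set τ' := τ * Equiv.swap b m with hτ'
      have hτ'inv : ∀ j, τ'⁻¹ j = Equiv.swap b m (τ⁻¹ j) := by
        intro j
        rw [hτ', mul_inv_rev, Equiv.swap_inv, Equiv.Perm.mul_apply]
      have hsub : τ'.support ⊆ τ.support.erase m := by
        intro x hx
        have hx' : τ' x ≠ x := Equiv.Perm.mem_support.1 hx
        rw [Finset.mem_erase]
        constructor
        · intro hxm
          apply hx'
          rw [hxm, hτ', Equiv.Perm.mul_apply, Equiv.swap_apply_right, hτb]
        · rw [Equiv.Perm.mem_support]
          intro hfix
          apply hx'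
          have hxb : x ≠ b := by
            intro h; rw [h, hτb] at hfix; exact hbm hfix.symm
          have hxm : x ≠ m := by
            intro h; rw [h] at hfix; exact hmne hfix
          rw [hτ', Equiv.Perm.mul_apply, Equiv.swap_apply_of_ne_of_ne hxb hxm, hfix]
      have hcard : τ'.support.card ≤ k := by
        have h2 := Finset.card_le_card hsub
        rw [Finset.card_erase_of_mem hm] at h2
        omega
      obtain ⟨l, hl1, hl2, hl3⟩ := ih τ' hcard
      refine ⟨l ++ l₀, ?_, ?_, ?_⟩
      · intro i hi
        rcases List.mem_append.1 hi with h | h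
        · exact hl1 i h
        · exact hl₀1 i h
      · rw [List.map_append, List.prod_append, hl2, hl₀2', hτ', mul_assoc,
          Equiv.swap_mul_self, mul_one]
      · clear hl₀2 hl₀2'
        have hstep : ∑ j : Fin n, wsum φ (j : ℕ) ((τ⁻¹ j : Fin n) : ℕ) =
            (∑ j : Fin n, wsum φ (j : ℕ) ((τ'⁻¹ j : Fin n) : ℕ)) +
            ((wsum φ (c : ℕ) (m : ℕ) - wsum φ (c : ℕ) (b : ℕ)) +
             (wsum φ (m : ℕ) (b : ℕ) - 0)) := by
          have e1 : τ⁻¹ c = m := hτicm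
          have e2 : τ⁻¹ m = b := rfl
          have e3 : τ'⁻¹ c = b := by rw [hτ'inv, hτicm, Equiv.swap_apply_right]
          have e4 : τ'⁻¹ m = m := by
            rw [hτ'inv]
            show Equiv.swap b m b = m
            exact Equiv.swap_apply_left _ _
          have := sum_two_diff (fun j => wsum φ (j : ℕ) ((τ⁻¹ j : Fin n) : ℕ))
            (fun j => wsum φ (j : ℕ) ((τ'⁻¹ j : Fin n) : ℕ)) c m hcm ?_
          · simpa only [e1, e2, e3, e4, wsum_self] using this
          · intro j hjc hjm
            have h5 : τ⁻¹ j ≠ b := by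
              intro h
              apply hjm
              have := congrArg τ h
              rw [show τ (τ⁻¹ j) = j from τ.apply_symm_apply j, hτb] at this
              exact this
            have h6 : τ⁻¹ j ≠ m := by
              intro h
              apply hjc
              have := congrArg τ h
              rw [show τ (τ⁻¹ j) = j from τ.apply_symm_apply j] at this
              exact this
            simp only [hτ'inv, Equiv.swap_apply_of_ne_of_ne h5 h6]
        rw [List.map_append, List.sum_append, hstep]
        have e5 : wsum φ (c : ℕ) (m : ℕ) = wsum φ (c : ℕ) (b : ℕ) + wsum φ (b : ℕ) (m : ℕ) :=
          wsum_add φ hcb (le_of_lt hblt)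
        have e6 : wsum φ (m : ℕ) (b : ℕ) = wsum φ (b : ℕ) (m : ℕ) := wsum_comm φ _ _
        linarith
    · -- move m down to c's place from the left: τ = swap c m * τ''
      obtain ⟨l₀, hl₀1, hl₀2, hl₀3⟩ := swap_list φ hφ hclt m.isLt
      have hl₀2' : (l₀.map (adjSwap n)).prod = Equiv.swap c m := by
        rw [hl₀2]
      set τ'' := Equiv.swap c m * τ with hτ''
      have hτ''inv : ∀ j, τ''⁻¹ j = τ⁻¹ (Equiv.swap c m j) := by
        intro j
        rw [hτ'', mul_inv_rev, Equiv.swap_inv, Equiv.Perm.mul_apply]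
      have hsub : τ''.support ⊆ τ.support.erase m := by
        intro x hx
        have hx' : τ'' x ≠ x := Equiv.Perm.mem_support.1 hx
        rw [Finset.mem_erase]
        constructor
        · intro hxm
          apply hx'
          rw [hxm, hτ'', Equiv.Perm.mul_apply, ← hc_def, Equiv.swap_apply_left]
        · rw [Equiv.Perm.mem_support]
          intro hfix
          apply hx'
          have hxc : x ≠ c := by
            intro h
            rw [h] at hfix
            exact (Equiv.Perm.mem_support.1 hcmem) hfix
          have hxm : x ≠ m := by
            intro h; rw [h] at hfix; exact hmne hfix
          rw [hτ'', Equiv.Perm.mul_apply, hfix, Equiv.swap_apply_of_ne_of_ne hxc hxm]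
      have hcard : τ''.support.card ≤ k := by
        have h2 := Finset.card_le_card hsub
        rw [Finset.card_erase_of_mem hm] at h2
        omega
      obtain ⟨l, hl1, hl2, hl3⟩ := ih τ'' hcard
      refine ⟨l₀ ++ l, ?_, ?_, ?_⟩
      · intro i hi
        rcases List.mem_append.1 hi with h | h
        · exact hl₀1 i h
        · exact hl1 i h
      · rw [List.map_append, List.prod_append, hl2, hl₀2', hτ'', ← mul_assoc,
          Equiv.swap_mul_self, one_mul]
      · clear hl₀2 hl₀2'
        have hstep : ∑ j : Fin n, wsum φ (j : ℕ) ((τ⁻¹ j : Fin n) : ℕ) =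
            (∑ j : Fin n, wsum φ (j : ℕ) ((τ''⁻¹ j : Fin n) : ℕ)) +
            ((wsum φ (c : ℕ) (m : ℕ) - wsum φ (c : ℕ) (b : ℕ)) +
             (wsum φ (m : ℕ) (b : ℕ) - 0)) := by
          have e1 : τ⁻¹ c = m := hτicm
          have e2 : τ⁻¹ m = b := rfl
          have e3 : τ''⁻¹ c = b := by rw [hτ''inv, Equiv.swap_apply_left]
          have e4 : τ''⁻¹ m = m := by rw [hτ''inv, Equiv.swap_apply_right, hτicm]
          have := sum_two_diff (fun j => wsum φ (j : ℕ) ((τ⁻¹ j : Fin n) : ℕ))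
            (fun j => wsum φ (j : ℕ) ((τ''⁻¹ j : Fin n) : ℕ)) c m hcm ?_
          · simpa only [e1, e2, e3, e4, wsum_self] using this
          · intro j hjc hjm
            simp only [hτ''inv, Equiv.swap_apply_of_ne_of_ne hjc hjm]
        rw [List.map_append, List.sum_append, hstep]
        have e5 : wsum φ (b : ℕ) (m : ℕ) = wsum φ (b : ℕ) (c : ℕ) + wsum φ (c : ℕ) (m : ℕ) :=
          wsum_add φ hbc (le_of_lt hclt)
        have e6 : wsum φ (m : ℕ) (b : ℕ) = wsum φ (b : ℕ) (m : ℕ) := wsum_comm φ _ _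
        have e7 : wsum φ (c : ℕ) (b : ℕ) = wsum φ (b : ℕ) (c : ℕ) := wsum_comm φ _ _
        linarith

end Aux2

section Aux3

variable {n : ℕ}

private lemma sum_wsum_adjSwap (φ : ℕ → ℝ) {h : ℕ} (hh : h + 1 < n) :
    ∑ j : Fin n, wsum φ (j : ℕ) ((adjSwap n h j : Fin n) : ℕ) = 2 * φ h := by
  set x : Fin n := ⟨h, Nat.lt_of_succ_lt hh⟩ with hx
  set y : Fin n := ⟨h + 1, hh⟩ with hy
  have hxy : x ≠ y := by
    intro hcon
    have := congrArg Fin.val hcon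
    simp [hx, hy] at this
  have key : ∀ j : Fin n, wsum φ (j : ℕ) ((adjSwap n h j : Fin n) : ℕ) =
      (if j = x then φ h else 0) + (if j = y then φ h else 0) := by
    intro j
    rw [adjSwap_eq hh, ← hx, ← hy]
    by_cases h1 : j = x
    · subst h1
      rw [Equiv.swap_apply_left, if_pos rfl, if_neg hxy]
      have : wsum φ (x : ℕ) (y : ℕ) = φ h := by
        show wsum φ h (h + 1) = φ h
        exact wsum_adj φ h
      rw [this, add_zero]
    · by_cases h2 : j = y
      · subst h2
        rw [Equiv.swap_apply_right, if_neg h1, if_pos rfl]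
        have : wsum φ (y : ℕ) (x : ℕ) = φ h := by
          show wsum φ (h + 1) h = φ h
          rw [wsum_comm]
          exact wsum_adj φ h
        rw [this, zero_add]
      · rw [Equiv.swap_apply_of_ne_of_ne h1 h2, if_neg h1, if_neg h2, wsum_self, add_zero]
  rw [Finset.sum_congr rfl (fun j _ => key j), Finset.sum_add_distrib,
    Finset.sum_ite_eq' Finset.univ, Finset.sum_ite_eq' Finset.univ]
  simp
  ring

private lemma D_step (φ : ℕ → ℝ) (hφ : ∀ i, 0 ≤ φ i) (π σ : Equiv.Perm (Fin n)) {h : ℕ}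
    (hh : h + 1 < n) :
    DKendall φ π σ ≤ DKendall φ (π * adjSwap n h) σ + 2 * φ h := by
  have hinv : ∀ i, (π * adjSwap n h)⁻¹ i = adjSwap n h (π⁻¹ i) := by
    intro i
    rw [mul_inv_rev, adjSwap_inv, Equiv.Perm.mul_apply]
  have tri : ∀ i : Fin n, wsum φ ((π⁻¹ i : Fin n) : ℕ) ((σ⁻¹ i : Fin n) : ℕ) ≤
      wsum φ (((π * adjSwap n h)⁻¹ i : Fin n) : ℕ) ((σ⁻¹ i : Fin n) : ℕ) +
      wsum φ ((π⁻¹ i : Fin n) : ℕ) (((π * adjSwap n h)⁻¹ i : Fin n) : ℕ) := by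
    intro i
    rw [hinv i]
    have t1 := wsum_triangle φ hφ ((π⁻¹ i : Fin n) : ℕ)
      ((adjSwap n h (π⁻¹ i) : Fin n) : ℕ) ((σ⁻¹ i : Fin n) : ℕ)
    have t2 := wsum_comm φ ((adjSwap n h (π⁻¹ i) : Fin n) : ℕ) ((π⁻¹ i : Fin n) : ℕ)
    linarith
  have hsum : ∑ i : Fin n, wsum φ ((π⁻¹ i : Fin n) : ℕ) (((π * adjSwap n h)⁻¹ i : Fin n) : ℕ)
      = 2 * φ h := by
    have hre : ∀ i : Fin n, wsum φ ((π⁻¹ i : Fin n) : ℕ) (((π * adjSwap n h)⁻¹ i : Fin n) : ℕ)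
        = (fun j : Fin n => wsum φ (j : ℕ) ((adjSwap n h j : Fin n) : ℕ)) (π⁻¹ i) := by
      intro i
      rw [hinv i]
    rw [Finset.sum_congr rfl (fun i _ => hre i),
      Equiv.sum_comp (π⁻¹ : Equiv.Perm (Fin n)) (fun j : Fin n => wsum φ (j : ℕ) ((adjSwap n h j : Fin n) : ℕ))]
    exact sum_wsum_adjSwap φ hh
  unfold DKendall
  calc ∑ i : Fin n, wsum φ ((π⁻¹ i : Fin n) : ℕ) ((σ⁻¹ i : Fin n) : ℕ)
      ≤ ∑ i : Fin n, (wsum φ (((π * adjSwap n h)⁻¹ i : Fin n) : ℕ) ((σ⁻¹ i : Fin n) : ℕ) +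
        wsum φ ((π⁻¹ i : Fin n) : ℕ) (((π * adjSwap n h)⁻¹ i : Fin n) : ℕ)) :=
        Finset.sum_le_sum (fun i _ => tri i)
    _ = (∑ i : Fin n, wsum φ (((π * adjSwap n h)⁻¹ i : Fin n) : ℕ) ((σ⁻¹ i : Fin n) : ℕ)) +
        ∑ i : Fin n, wsum φ ((π⁻¹ i : Fin n) : ℕ) (((π * adjSwap n h)⁻¹ i : Fin n) : ℕ) :=
        Finset.sum_add_distrib
    _ ≤ _ := by rw [hsum]

private lemma D_le_twice (φ : ℕ → ℝ) (hφ : ∀ i, 0 ≤ φ i) :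
    ∀ (l : List ℕ) (π : Equiv.Perm (Fin n)), (∀ i ∈ l, i + 1 < n) →
      DKendall φ π (π * (l.map (adjSwap n)).prod) ≤ 2 * (l.map φ).sum := by
  intro l
  induction l with
  | nil =>
    intro π _
    simp [DKendall, wsum_self]
  | cons a t ih =>
    intro π hmem
    have ha : a + 1 < n := hmem a (by simp)
    have ht : ∀ i ∈ t, i + 1 < n := fun i hi => hmem i (by simp [hi])
    have h2 := ih (π * adjSwap n a) ht
    have h3 := D_step φ hφ π (π * adjSwap n a * (t.map (adjSwap n)).prod) ha
    simp only [List.map_cons, List.prod_cons, List.sum_cons] at *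
    rw [← mul_assoc]
    linarith

end Aux3

theorem stmt7 (n : ℕ) (φ : ℕ → ℝ) (hφ : ∀ i, 0 ≤ φ i) (π σ : Equiv.Perm (Fin n)) :
    (1 / 2) * DKendall φ π σ ≤ wKendall φ π σ ∧ wKendall φ π σ ≤ DKendall φ π σ := by
  obtain ⟨l, hl1, hl2, hl3⟩ := exists_sort φ hφ (π⁻¹ * σ)
  have hσ : σ = π * (l.map (adjSwap n)).prod := by
    rw [hl2, ← mul_assoc, mul_inv_cancel, one_mul]
  have hmem : (l.map φ).sum ∈ {w | ∃ l' : List ℕ, (∀ i ∈ l', i + 1 < n) ∧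
      σ = π * (l'.map (adjSwap n)).prod ∧ (l'.map φ).sum = w} := ⟨l, hl1, hσ, rfl⟩
  have hbdd : BddBelow {w | ∃ l' : List ℕ, (∀ i ∈ l', i + 1 < n) ∧
      σ = π * (l'.map (adjSwap n)).prod ∧ (l'.map φ).sum = w} := by
    refine ⟨0, ?_⟩
    rintro x ⟨l', hl', hσ', rfl⟩
    apply List.sum_nonneg
    intro y hy
    obtain ⟨i, _, rfl⟩ := List.mem_map.1 hy
    exact hφ i
  have hD : DKendall φ π σ = ∑ j : Fin n, wsum φ (j : ℕ) (((π⁻¹ * σ)⁻¹ j : Fin n) : ℕ) := by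
    unfold DKendall
    rw [← Equiv.sum_comp (π : Equiv.Perm (Fin n))
      (fun i : Fin n => wsum φ ((π⁻¹ i : Fin n) : ℕ) ((σ⁻¹ i : Fin n) : ℕ))]
    apply Finset.sum_congr rfl
    intro j _
    have e1 : π⁻¹ (π j) = j := π.symm_apply_apply j
    have e2 : σ⁻¹ (π j) = (π⁻¹ * σ)⁻¹ j := by
      rw [mul_inv_rev, inv_inv, Equiv.Perm.mul_apply]
    simp only [e1, e2]
  constructor
  · apply le_csInf ⟨_, hmem⟩
    rintro x ⟨l', hl', hσ', rfl⟩
    have h2 := D_le_twice φ hφ l' π hl'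
    rw [← hσ'] at h2
    linarith
  · have h1 : wKendall φ π σ ≤ (l.map φ).sum := csInf_le hbdd hmem
    rw [hD] at *
    linarith
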